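/- Let G be a group such that the intersection P of the transfinite lower central series of G contains no subgroup isomorphic to ℚ; equivalently, suppose the maximal subgroup P ≤ G with P = [G,P] contains no subgroup isomorphic to ℚ. Then every subgroup D ≤ G isomorphic to ℚ has nontrivial central image in the quotient G/[G,N], where N is the normal closure of D. -/

import Mathlib

open scoped commutatorElement
theorem stmt_16 {G : Type*} [Group G]
    (hP : ∀ P : Subgroup G, ⁅(⊤ : Subgroup G), P⁆ = P →
      ∀ D : Subgroup G, D ≤ P → ¬ Nonempty (D ≃* Multiplicative ℚ)) :
    ∀ D : Subgroup G, Nonempty (D ≃* Multiplicative ℚ) →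
      (∃ d ∈ D, (QuotientGroup.mk d :
          G ⧸ ⁅(⊤ : Subgroup G), Subgroup.normalClosure (D : Set G)⁆) ≠ 1) ∧
      (∀ d ∈ D, (QuotientGroup.mk d :
          G ⧸ ⁅(⊤ : Subgroup G), Subgroup.normalClosure (D : Set G)⁆) ∈
        Subgroup.center
          (G ⧸ ⁅(⊤ : Subgroup G), Subgroup.normalClosure (D : Set G)⁆)) := by
  intro D hD
  set N := Subgroup.normalClosure (D : Set G) with hN
  set K : Subgroup G := ⁅(⊤ : Subgroup G), N⁆ with hK
  have hKN : K ≤ N := Subgroup.commutator_le_right ⊤ N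
  constructor
  · by_contra h
    push_neg at h
    have hDK : (D : Set G) ⊆ (K : Set G) := by
      intro d hd
      have := h d hd
      rwa [QuotientGroup.eq_one_iff] at this
    have hNK : N ≤ K := Subgroup.normalClosure_le_normal hDK
    have hEq : ⁅(⊤ : Subgroup G), N⁆ = N := le_antisymm hKN hNK
    exact hP N hEq D (le_trans (by exact_mod_cast Subgroup.subset_normalClosure) (le_refl N)) hD
  · intro d hd
    rw [Subgroup.mem_center_iff]
    intro g
    induction g using QuotientGroup.induction_on with
    | H x =>
      have hdN : d ∈ N := Subgroup.subset_normalClosure hd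
      have hcomm : ⁅x, d⁆ ∈ K :=
        Subgroup.commutator_mem_commutator (Subgroup.mem_top x) hdN
      have h1 : (QuotientGroup.mk ⁅x, d⁆ : G ⧸ K) = 1 :=
        (QuotientGroup.eq_one_iff _).mpr hcomm
      rw [show ((⁅x, d⁆ : G) : G ⧸ K) = ⁅(x : G ⧸ K), (d : G ⧸ K)⁆ from
        map_commutatorElement (QuotientGroup.mk' K) x d] at h1
      exact commutatorElement_eq_one_iff_mul_comm.mp h1
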